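/- Let p > 1, let Γ : ℝⁿ × ℝⁿ × (0,∞) → [0,∞) be measurable satisfying (K1) and the pointwise bound Γ(x,y,t) ≤ D t^{−(n+α)/2} for all x, y ∈ ℝⁿ and t > 0, and let u₀ ∈ L^∞ with u₀ ≥ 0. Then there exists a positive time T such that the integral equation has a unique solution u on ℝⁿ × (0,T) with initial data u₀, and this solution satisfies sup_{0<t<T} ‖u(t)‖_{L^∞} ≤ 2 c_{**} ‖u₀‖_{L^∞}, where c_{**} is a constant depending only on n and α with ‖S(t)φw‖_{L^∞} ≤ c_{**} ‖φ‖_{L^∞} for all t > 0 and φ ∈ L^∞. -/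

import Mathlib

open MeasureTheory Metric Set ENNReal Filter

/-- Case (A) or case (B) of the paper: the weight is `w(x) = |x₁|^α` with `0 ≤ α < 1`,
or `w(x) = |x|^α` with `0 ≤ α < n`. -/
def CaseAB (n : ℕ) (hn : 0 < n) (α : ℝ) (w : EuclideanSpace ℝ (Fin n) → ℝ) : Prop :=
  (0 ≤ α ∧ α < 1 ∧ ∀ x, w x = |x ⟨0, hn⟩| ^ α) ∨
  (0 ≤ α ∧ (α : ℝ) < n ∧ ∀ x, w x = ‖x‖ ^ α)

/-- The measure `w(x) dx` on `ℝⁿ`. -/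
noncomputable def wMeas (n : ℕ) (w : EuclideanSpace ℝ (Fin n) → ℝ) :
    Measure (EuclideanSpace ℝ (Fin n)) :=
  volume.withDensity fun x => ENNReal.ofReal (w x)

/-- The weak Lorentz norm `‖f‖_{L^{r,∞}(μ)} = sup_{λ>0} λ μ({|f| > λ})^{1/r}` for
`1 < r < ∞`, with `L^{∞,∞}(μ) = L^∞`. -/
noncomputable def weakNorm {X : Type*} [MeasurableSpace X] (μ : Measure X) (f : X → ℝ)
    (r : ENNReal) : ENNReal :=
  if r = ⊤ then eLpNorm f ⊤ μ
  else ⨆ (lam : ℝ) (_ : 0 < lam), ENNReal.ofReal lam * μ {x | lam < |f x|} ^ (1 / r.toReal)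

/-- Property (K1): `∫ Γ(x,y,t) w(x) dx = ∫ Γ(x,y,t) w(y) dy = 1` for all `x, y, t > 0`. -/
def PropK1 {n : ℕ} (w : EuclideanSpace ℝ (Fin n) → ℝ)
    (Γ : EuclideanSpace ℝ (Fin n) → EuclideanSpace ℝ (Fin n) → ℝ → ℝ) : Prop :=
  ∀ (x y : EuclideanSpace ℝ (Fin n)) (t : ℝ), 0 < t →
    (∫⁻ z, ENNReal.ofReal (Γ z y t * w z)) = 1 ∧ (∫⁻ z, ENNReal.ofReal (Γ x z t * w z)) = 1

/-- Property (K2): `Γ(x,y,t) = ∫ Γ(x,ξ,t-s) Γ(ξ,y,s) w(ξ) dξ` for `t > s > 0`. -/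
def PropK2 {n : ℕ} (w : EuclideanSpace ℝ (Fin n) → ℝ)
    (Γ : EuclideanSpace ℝ (Fin n) → EuclideanSpace ℝ (Fin n) → ℝ → ℝ) : Prop :=
  ∀ (x y : EuclideanSpace ℝ (Fin n)) (s t : ℝ), 0 < s → s < t →
    ENNReal.ofReal (Γ x y t) = ∫⁻ ξ, ENNReal.ofReal (Γ x ξ (t - s) * Γ ξ y s * w ξ)

/-- Property (K3): two-sided Gaussian bounds in terms of `w(B(x,√t))`. -/
def PropK3 {n : ℕ} (w : EuclideanSpace ℝ (Fin n) → ℝ)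
    (Γ : EuclideanSpace ℝ (Fin n) → EuclideanSpace ℝ (Fin n) → ℝ → ℝ) : Prop :=
  ∃ cs Cs : ℝ, 0 < cs ∧ cs ≤ Cs ∧
    ∀ (x y : EuclideanSpace ℝ (Fin n)) (t : ℝ), 0 < t →
      cs / (Real.sqrt (∫ z in ball x (Real.sqrt t), w z) *
            Real.sqrt (∫ z in ball y (Real.sqrt t), w z)) *
          Real.exp (-‖x - y‖ ^ 2 / (cs * t)) ≤ Γ x y t ∧
      Γ x y t ≤ Cs / (Real.sqrt (∫ z in ball x (Real.sqrt t), w z) *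
            Real.sqrt (∫ z in ball y (Real.sqrt t), w z)) *
          Real.exp (-‖x - y‖ ^ 2 / (Cs * t))

/-- `u` is a (mild) solution of `∂ₜu - w⁻¹ div(w ∇u) = uᵖ`, `u(·,0) = u₀ ≥ 0`, on
`ℝⁿ × (0,T)`: `u` is nonnegative, measurable, essentially bounded on `ℝⁿ × (0,t)` for all
`t < T`, and for each `0 < t < T` and almost every `x`,
`u(x,t) = ∫ Γ(x,y,t) u₀(y) w(y) dy + ∫₀ᵗ ∫ Γ(x,y,t-s) u(y,s)ᵖ w(y) dy ds < ∞`;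
it is global-in-time if `T = ∞`. -/
def IsSolOn (n : ℕ) (w : EuclideanSpace ℝ (Fin n) → ℝ)
    (Γ : EuclideanSpace ℝ (Fin n) → EuclideanSpace ℝ (Fin n) → ℝ → ℝ) (p : ℝ)
    (u₀ : EuclideanSpace ℝ (Fin n) → ℝ) (u : EuclideanSpace ℝ (Fin n) → ℝ → ℝ)
    (T : ENNReal) : Prop :=
  Measurable (Function.uncurry u) ∧
  (∀ x t, 0 ≤ u x t) ∧
  (∃ M : ℝ, ∀ t : ℝ, 0 < t → ENNReal.ofReal t < T →
    ∀ᵐ x ∂(volume : Measure (EuclideanSpace ℝ (Fin n))), u x t ≤ M) ∧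
  ∀ t : ℝ, 0 < t → ENNReal.ofReal t < T →
    ∀ᵐ x ∂(volume : Measure (EuclideanSpace ℝ (Fin n))),
      ENNReal.ofReal (u x t) =
        (∫⁻ y, ENNReal.ofReal (Γ x y t * u₀ y * w y)) +
        ∫⁻ s in Ioo (0 : ℝ) t, ∫⁻ y, ENNReal.ofReal (Γ x y (t - s) * u y s ^ p * w y)

/-- `[S(t)φw](x) = ∫ Γ(x,y,t) φ(y) w(y) dy`. -/
noncomputable def Sop {n : ℕ} (μ : Measure (EuclideanSpace ℝ (Fin n)))
    (Γ : EuclideanSpace ℝ (Fin n) → EuclideanSpace ℝ (Fin n) → ℝ → ℝ)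
    (φ : EuclideanSpace ℝ (Fin n) → ℝ) (t : ℝ) (x : EuclideanSpace ℝ (Fin n)) : ℝ :=
  ∫ y, Γ x y t * φ y ∂μ

namespace Stmt19

variable {α : Type*} [MeasurableSpace α]

noncomputable def kerA (μ : Measure α) (Γ : α → α → ℝ → ℝ) (u₀ w : α → ℝ)
    (x : α) (t : ℝ) : ℝ≥0∞ :=
  ∫⁻ y, ENNReal.ofReal (Γ x y t * u₀ y * w y) ∂μ

noncomputable def nonlin (μ : Measure α) (Γ : α → α → ℝ → ℝ) (w : α → ℝ) (p : ℝ)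
    (v : α → ℝ → ℝ≥0∞) (x : α) (t : ℝ) : ℝ≥0∞ :=
  ∫⁻ s in Set.Ioo (0:ℝ) t, ∫⁻ y, ENNReal.ofReal (Γ x y (t - s) * w y) * v y s ^ p ∂μ

noncomputable def picard (μ : Measure α) (Γ : α → α → ℝ → ℝ) (u₀ w : α → ℝ) (p : ℝ) :
    ℕ → α → ℝ → ℝ≥0∞
  | 0 => fun _ _ => 0
  | k + 1 => fun x t => kerA μ Γ u₀ w x t + nonlin μ Γ w p (picard μ Γ u₀ w p k) x t

variable {μ : Measure α} [SFinite μ] {Γ : α → α → ℝ → ℝ} {u₀ w : α → ℝ} {p : ℝ}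

lemma measurable_kerA (hΓ : Measurable fun q : α × α × ℝ => Γ q.1 q.2.1 q.2.2)
    (hu : Measurable u₀) (hw : Measurable w) :
    Measurable fun q : α × ℝ => kerA μ Γ u₀ w q.1 q.2 := by
  apply Measurable.lintegral_prod_right'
    (f := fun q : (α × ℝ) × α => ENNReal.ofReal (Γ q.1.1 q.2 q.1.2 * u₀ q.2 * w q.2))
  apply ENNReal.measurable_ofReal.comp
  apply Measurable.mul
  apply Measurable.mul
  · exact hΓ.comp ((measurable_fst.comp measurable_fst).prodMk
      (measurable_snd.prodMk (measurable_snd.comp measurable_fst)))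
  · exact hu.comp measurable_snd
  · exact hw.comp measurable_snd

lemma measurable_inner_nonlin (hΓ : Measurable fun q : α × α × ℝ => Γ q.1 q.2.1 q.2.2)
    (hw : Measurable w) {v : α → ℝ → ℝ≥0∞} (hv : Measurable fun q : α × ℝ => v q.1 q.2) :
    Measurable fun q : (α × ℝ) × ℝ =>
      ∫⁻ y, ENNReal.ofReal (Γ q.1.1 y (q.1.2 - q.2) * w y) * v y q.2 ∂μ := by
  apply Measurable.lintegral_prod_right'
    (f := fun q : ((α × ℝ) × ℝ) × α =>
      ENNReal.ofReal (Γ q.1.1.1 q.2 (q.1.1.2 - q.1.2) * w q.2) * v q.2 q.1.2)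
  apply Measurable.mul
  · apply ENNReal.measurable_ofReal.comp
    apply Measurable.mul
    · exact hΓ.comp ((measurable_fst.comp (measurable_fst.comp measurable_fst)).prodMk
        (measurable_snd.prodMk (((measurable_snd.comp (measurable_fst.comp measurable_fst)).sub
          (measurable_snd.comp measurable_fst)))))
    · exact hw.comp measurable_snd
  · exact hv.comp (measurable_snd.prodMk (measurable_snd.comp measurable_fst))

lemma measurable_nonlin (hΓ : Measurable fun q : α × α × ℝ => Γ q.1 q.2.1 q.2.2)
    (hw : Measurable w) {v : α → ℝ → ℝ≥0∞} (hv : Measurable fun q : α × ℝ => v q.1 q.2)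
    (hp : 0 ≤ p) :
    Measurable fun q : α × ℝ => nonlin μ Γ w p v q.1 q.2 := by
  have hvp : Measurable fun q : α × ℝ => v q.1 q.2 ^ p :=
    ENNReal.continuous_rpow_const.measurable.comp hv
  have h1 := measurable_inner_nonlin (μ := μ) (v := fun y s => v y s ^ p) hΓ hw hvp
  have : (fun q : α × ℝ => nonlin μ Γ w p v q.1 q.2) = fun q : α × ℝ =>
      ∫⁻ s, (Set.Ioo (0:ℝ) q.2).indicator
        (fun s => ∫⁻ y, ENNReal.ofReal (Γ q.1 y (q.2 - s) * w y) * v y s ^ p ∂μ) s := by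
    funext q
    rw [nonlin, ← lintegral_indicator measurableSet_Ioo]
  rw [this]
  apply Measurable.lintegral_prod_right'
    (f := fun q : (α × ℝ) × ℝ => (Set.Ioo (0:ℝ) q.1.2).indicator
      (fun s => ∫⁻ y, ENNReal.ofReal (Γ q.1.1 y (q.1.2 - s) * w y) * v y s ^ p ∂μ) q.2)
  have : (fun q : (α × ℝ) × ℝ => (Set.Ioo (0:ℝ) q.1.2).indicator
      (fun s => ∫⁻ y, ENNReal.ofReal (Γ q.1.1 y (q.1.2 - s) * w y) * v y s ^ p ∂μ) q.2)
      = fun q : (α × ℝ) × ℝ => if q ∈ {q : (α × ℝ) × ℝ | 0 < q.2 ∧ q.2 < q.1.2} then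
        ∫⁻ y, ENNReal.ofReal (Γ q.1.1 y (q.1.2 - q.2) * w y) * v y q.2 ^ p ∂μ else 0 := by
    funext q
    by_cases h : 0 < q.2 ∧ q.2 < q.1.2
    · rw [Set.indicator_of_mem (by exact h)]; simp [Set.mem_setOf_eq, h]
    · rw [Set.indicator_of_notMem (by exact h)]; simp [Set.mem_setOf_eq, h]
  rw [this]
  apply Measurable.ite _ h1 measurable_const
  exact MeasurableSet.inter
    (measurableSet_lt measurable_const measurable_snd)
    (measurableSet_lt measurable_snd (measurable_snd.comp measurable_fst))

lemma measurable_picard (hΓ : Measurable fun q : α × α × ℝ => Γ q.1 q.2.1 q.2.2)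
    (hu : Measurable u₀) (hw : Measurable w) (hp : 0 ≤ p) (k : ℕ) :
    Measurable fun q : α × ℝ => picard μ Γ u₀ w p k q.1 q.2 := by
  induction k with
  | zero => exact measurable_const
  | succ k ih =>
    exact (measurable_kerA hΓ hu hw).add (measurable_nonlin hΓ hw ih hp)

omit [SFinite μ] in
lemma nonlin_mono {v v' : α → ℝ → ℝ≥0∞} (hp : 0 ≤ p) (h : ∀ y s, v y s ≤ v' y s) :
    ∀ x t, nonlin μ Γ w p v x t ≤ nonlin μ Γ w p v' x t := by
  intro x t
  apply lintegral_mono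
  intro s
  apply lintegral_mono
  intro y
  exact mul_le_mul_right (ENNReal.rpow_le_rpow (h y s) hp) _

omit [SFinite μ] in
lemma picard_mono (hp : 0 ≤ p) (k : ℕ) :
    ∀ x t, picard μ Γ u₀ w p k x t ≤ picard μ Γ u₀ w p (k + 1) x t := by
  induction k with
  | zero => intro x t; exact zero_le
  | succ k ih =>
    intro x t
    exact add_le_add_right (nonlin_mono hp (fun y s => ih y s) x t) _

/-- Lipschitz estimate for `x ^ p` on `[0, K]`. -/
lemma rpow_lip {p K a b : ℝ} (hp : 1 ≤ p) (ha : 0 ≤ a) (hb : 0 ≤ b)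
    (haK : a ≤ K) (hbK : b ≤ K) : |a ^ p - b ^ p| ≤ p * K ^ (p - 1) * |a - b| := by
  have hK : 0 ≤ K := le_trans ha haK
  have key : ∀ c d : ℝ, 0 ≤ c → c ≤ d → d ≤ K → d ^ p - c ^ p ≤ p * K ^ (p - 1) * (d - c) := by
    intro c d hc hcd hdK
    have h1 : ∫ x in c..d, x ^ (p - 1) = (d ^ p - c ^ p) / p := by
      rw [integral_rpow (Or.inl (by linarith))]
      norm_num
    have h2 : ∫ x in c..d, x ^ (p - 1) ≤ ∫ x in c..d, K ^ (p - 1) := by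
      apply intervalIntegral.integral_mono_on hcd
        (intervalIntegral.intervalIntegrable_rpow (Or.inl (by linarith)))
        intervalIntegrable_const
      intro x hx
      exact Real.rpow_le_rpow (le_trans hc hx.1) (le_trans hx.2 hdK) (by linarith)
    rw [h1, intervalIntegral.integral_const, smul_eq_mul] at h2
    have hp0 : 0 < p := by linarith
    calc d ^ p - c ^ p = p * ((d ^ p - c ^ p) / p) := by field_simp
    _ ≤ p * ((d - c) * K ^ (p - 1)) := by
        apply mul_le_mul_of_nonneg_left h2 hp0.le
    _ = p * K ^ (p - 1) * (d - c) := by ring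
  rcases le_total b a with h | h
  · have h2 : b ^ p ≤ a ^ p := Real.rpow_le_rpow hb h (by linarith)
    rw [abs_of_nonneg (by linarith), abs_of_nonneg (by linarith)]
    exact key b a hb h haK
  · have h2 : a ^ p ≤ b ^ p := Real.rpow_le_rpow ha h (by linarith)
    rw [abs_sub_comm, abs_sub_comm a b, abs_of_nonneg (by linarith), abs_of_nonneg (by linarith)]
    exact key a b ha h hbK

end Stmt19

open Stmt19 in
set_option maxHeartbeats 2000000 in
/-- Lemma 4.2: in case (A) or (B), with `p > 1`, measurable `Γ ≥ 0` satisfying (K1) and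
`Γ(x,y,t) ≤ D t^{-(n+α)/2}`, and a constant `c_{**} > 0` with
`‖S(t)φw‖_∞ ≤ c_{**} ‖φ‖_∞` for all bounded measurable `φ` and `t > 0`, for every
bounded nonnegative measurable `u₀` there is `T > 0` such that the integral equation has
a unique solution `u` on `ℝⁿ × (0,T)` with initial data `u₀`, satisfying
`sup_{0<t<T} ‖u(t)‖_∞ ≤ 2 c_{**} ‖u₀‖_∞`. -/
theorem stmt_19 (n : ℕ) (hn : 0 < n) (α : ℝ) (w : EuclideanSpace ℝ (Fin n) → ℝ)
    (hw : CaseAB n hn α w) (p : ℝ) (hp : 1 < p)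
    (Γ : EuclideanSpace ℝ (Fin n) → EuclideanSpace ℝ (Fin n) → ℝ → ℝ)
    (hmeas : Measurable (fun q : (EuclideanSpace ℝ (Fin n)) × (EuclideanSpace ℝ (Fin n)) × ℝ =>
      Γ q.1 q.2.1 q.2.2))
    (hΓ0 : ∀ x y t, 0 ≤ Γ x y t) (hK1 : PropK1 w Γ)
    (D : ℝ) (hD : 0 < D)
    (hΓD : ∀ (x y : EuclideanSpace ℝ (Fin n)) (t : ℝ), 0 < t →
      Γ x y t ≤ D * t ^ (-((n : ℝ) + α) / 2))
    (cσ : ℝ) (hcσ : 0 < cσ)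
    (hS : ∀ φ : EuclideanSpace ℝ (Fin n) → ℝ, Measurable φ →
      MemLp φ ⊤ (volume : Measure (EuclideanSpace ℝ (Fin n))) →
      ∀ t : ℝ, 0 < t →
        eLpNorm (Sop (wMeas n w) Γ φ t) ⊤ (volume : Measure (EuclideanSpace ℝ (Fin n))) ≤
          ENNReal.ofReal cσ * eLpNorm φ ⊤ (volume : Measure (EuclideanSpace ℝ (Fin n)))) :
    ∀ u₀ : EuclideanSpace ℝ (Fin n) → ℝ, Measurable u₀ → (∀ x, 0 ≤ u₀ x) →
      MemLp u₀ ⊤ (volume : Measure (EuclideanSpace ℝ (Fin n))) →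
      ∃ T : ℝ, 0 < T ∧
        ∃ u : EuclideanSpace ℝ (Fin n) → ℝ → ℝ,
          IsSolOn n w Γ p u₀ u (ENNReal.ofReal T) ∧
          (∀ v : EuclideanSpace ℝ (Fin n) → ℝ → ℝ,
            IsSolOn n w Γ p u₀ v (ENNReal.ofReal T) →
            ∀ t : ℝ, 0 < t → t < T →
              (fun x => v x t) =ᵐ[(volume : Measure (EuclideanSpace ℝ (Fin n)))]
                fun x => u x t) ∧
          ∀ t : ℝ, 0 < t → t < T →
            eLpNorm (fun x => u x t) ⊤ (volume : Measure (EuclideanSpace ℝ (Fin n))) ≤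
              ENNReal.ofReal (2 * cσ) *
                eLpNorm u₀ ⊤ (volume : Measure (EuclideanSpace ℝ (Fin n))) := by
  intro u₀ hu₀m hu₀0 hu₀ℒ
  classical
  have hp0 : (0:ℝ) ≤ p := by linarith
  have hppos : (0:ℝ) < p := by linarith
  -- weight facts
  have hw0 : ∀ x, 0 ≤ w x := by
    rcases hw with ⟨hα, _, hwe⟩ | ⟨hα, _, hwe⟩ <;> intro x <;> rw [hwe] <;>
      exact Real.rpow_nonneg (by positivity) _
  have hwm : Measurable w := by
    rcases hw with ⟨hα, _, hwe⟩ | ⟨hα, _, hwe⟩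
    · have : w = fun x => |x ⟨0, hn⟩| ^ α := funext hwe
      rw [this]; fun_prop
    · have : w = fun x => ‖x‖ ^ α := funext hwe
      rw [this]; fun_prop
  have hμ0 : (volume : Measure (EuclideanSpace ℝ (Fin n))) ≠ 0 := by
    have := (isOpen_univ (X := EuclideanSpace ℝ (Fin n))).measure_pos volume univ_nonempty
    intro h; rw [h] at this; simp at this
  -- (K1) in convenient form
  have hK1' : ∀ (x : EuclideanSpace ℝ (Fin n)) (t : ℝ), 0 < t →
      (∫⁻ y, ENNReal.ofReal (Γ x y t * w y)) = 1 := fun x t ht => (hK1 x x t ht).2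
  -- `cσ ≥ 1`
  have hcσ1 : (1:ℝ) ≤ cσ := by
    have h1ℒ : MemLp (fun _ : EuclideanSpace ℝ (Fin n) => (1:ℝ)) ⊤ volume := memLp_top_const 1
    have hSop : Sop (wMeas n w) Γ (fun _ => (1:ℝ)) 1 = fun _ => (1:ℝ) := by
      funext x
      have hg : Measurable fun y => Γ x y 1 :=
        hmeas.comp (measurable_const.prodMk (measurable_id.prodMk measurable_const))
      unfold Sop
      simp only [mul_one]
      rw [integral_eq_lintegral_of_nonneg_ae (Filter.Eventually.of_forall fun y => hΓ0 x y 1)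
        hg.aestronglyMeasurable]
      rw [wMeas, lintegral_withDensity_eq_lintegral_mul volume
        hwm.ennreal_ofReal hg.ennreal_ofReal]
      have : (∫⁻ y, ((fun z => ENNReal.ofReal (w z)) * fun y => ENNReal.ofReal (Γ x y 1)) y)
          = ∫⁻ y, ENNReal.ofReal (Γ x y 1 * w y) := by
        apply lintegral_congr
        intro y
        simp only [Pi.mul_apply]
        rw [← ENNReal.ofReal_mul (hw0 y), mul_comm]
      rw [this, hK1' x 1 one_pos]
      simp
    have h := hS (fun _ => (1:ℝ)) measurable_const h1ℒ 1 one_pos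
    rw [hSop] at h
    rw [eLpNorm_const _ (by simp) hμ0] at h
    simp only [nnnorm_one, ENNReal.coe_one, one_mul, ENNReal.toReal_top] at h
    norm_num at h
    exact h
  -- constants
  set N := eLpNorm u₀ ⊤ volume with hN
  have hNtop : N ≠ ⊤ := hu₀ℒ.2.ne
  set Nr := N.toReal with hNr
  have hNr0 : 0 ≤ Nr := ENNReal.toReal_nonneg
  have hNofReal : ENNReal.ofReal Nr = N := ENNReal.ofReal_toReal hNtop
  have hu₀ae : ∀ᵐ y ∂(volume : Measure (EuclideanSpace ℝ (Fin n))),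
      ENNReal.ofReal (u₀ y) ≤ N := by
    filter_upwards [ae_le_eLpNormEssSup (f := u₀) (μ := volume)] with y hy
    calc ENNReal.ofReal (u₀ y) ≤ ENNReal.ofReal ‖u₀ y‖ :=
          ENNReal.ofReal_le_ofReal (le_abs_self _)
    _ = ↑‖u₀ y‖₊ := ofReal_norm_eq_enorm _
    _ ≤ N := by rw [hN, eLpNorm_exponent_top]; exact hy
  -- bound on the linear part
  have hkerA : ∀ (x : EuclideanSpace ℝ (Fin n)) (t : ℝ), 0 < t →
      kerA volume Γ u₀ w x t ≤ N := by
    intro x t ht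
    calc kerA volume Γ u₀ w x t ≤ ∫⁻ y, N * ENNReal.ofReal (Γ x y t * w y) := by
          apply lintegral_mono_ae
          filter_upwards [hu₀ae] with y hy
          have h1 : Γ x y t * u₀ y * w y = u₀ y * (Γ x y t * w y) := by ring
          rw [h1, ENNReal.ofReal_mul (hu₀0 y)]
          exact mul_le_mul_left hy _
    _ = N * ∫⁻ y, ENNReal.ofReal (Γ x y t * w y) := lintegral_const_mul' _ _ hNtop
    _ = N := by rw [hK1' x t ht, mul_one]
  -- choice of T
  obtain ⟨T, hT0, hTle⟩ : ∃ T : ℝ, 0 < T ∧ ∀ t, 0 ≤ t → t ≤ T → t * (2*Nr)^p ≤ Nr := by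
    by_cases h : Nr = 0
    · refine ⟨1, one_pos, fun t ht0 ht1 => ?_⟩
      rw [h]
      simp [Real.zero_rpow (ne_of_gt hppos)]
    · have hNrpos : 0 < Nr := lt_of_le_of_ne hNr0 (Ne.symm h)
      have hpow : 0 < (2*Nr)^p := Real.rpow_pos_of_pos (by linarith) _
      refine ⟨Nr / (2*Nr)^p, by positivity, fun t ht0 ht1 => ?_⟩
      calc t * (2*Nr)^p ≤ (Nr / (2*Nr)^p) * (2*Nr)^p :=
            mul_le_mul_of_nonneg_right ht1 hpow.le
      _ = Nr := div_mul_cancel₀ _ (ne_of_gt hpow)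
  -- uniform bound for the nonlinear part
  have hnonlinb : ∀ (v : EuclideanSpace ℝ (Fin n) → ℝ → ℝ≥0∞) (B : ℝ), 0 ≤ B →
      (∀ y s, 0 < s → s ≤ T → v y s ≤ ENNReal.ofReal B) →
      ∀ x t, 0 < t → t ≤ T →
        nonlin volume Γ w p v x t ≤ ENNReal.ofReal (B^p) * ENNReal.ofReal t := by
    intro v B hB hv x t ht htT
    have hBp : ENNReal.ofReal B ^ p = ENNReal.ofReal (B ^ p) :=
      ENNReal.ofReal_rpow_of_nonneg hB hp0
    calc nonlin volume Γ w p v x t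
        ≤ ∫⁻ _ in Ioo (0:ℝ) t, ENNReal.ofReal (B ^ p) := by
          apply setLIntegral_mono' measurableSet_Ioo
          intro s hs
          calc (∫⁻ y, ENNReal.ofReal (Γ x y (t-s) * w y) * v y s ^ p)
              ≤ ∫⁻ y, ENNReal.ofReal (Γ x y (t-s) * w y) * ENNReal.ofReal (B ^ p) := by
                apply lintegral_mono; intro y
                refine mul_le_mul_right ?_ _
                rw [← hBp]
                exact ENNReal.rpow_le_rpow (hv y s hs.1 (le_trans hs.2.le htT)) hp0
          _ = (∫⁻ y, ENNReal.ofReal (Γ x y (t-s) * w y)) * ENNReal.ofReal (B^p) :=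
                lintegral_mul_const' _ _ ENNReal.ofReal_ne_top
          _ = ENNReal.ofReal (B^p) := by
                rw [hK1' x (t-s) (by linarith [hs.2]), one_mul]
    _ = ENNReal.ofReal (B^p) * ENNReal.ofReal t := by
          rw [setLIntegral_const, Real.volume_Ioo, sub_zero]
  -- uniform bound on the Picard iterates
  have hpic : ∀ (k : ℕ) (x : EuclideanSpace ℝ (Fin n)) (t : ℝ), 0 < t → t ≤ T →
      picard volume Γ u₀ w p k x t ≤ ENNReal.ofReal (2*Nr) := by
    intro k
    induction k with
    | zero => intro x t ht htT; simp only [picard]; exact zero_le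
    | succ k ih =>
      intro x t ht htT
      have h1 : kerA volume Γ u₀ w x t ≤ ENNReal.ofReal Nr := by
        rw [hNofReal]; exact hkerA x t ht
      have h2 : nonlin volume Γ w p (picard volume Γ u₀ w p k) x t ≤ ENNReal.ofReal Nr := by
        calc nonlin volume Γ w p (picard volume Γ u₀ w p k) x t
            ≤ ENNReal.ofReal ((2*Nr)^p) * ENNReal.ofReal t :=
              hnonlinb _ (2*Nr) (by linarith) (fun y s hs1 hs2 => ih y s hs1 hs2) x t ht htT
        _ = ENNReal.ofReal (t * (2*Nr)^p) := by
              rw [← ENNReal.ofReal_mul (by positivity), mul_comm]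
        _ ≤ ENNReal.ofReal Nr := ENNReal.ofReal_le_ofReal (hTle t ht.le htT)
      calc picard volume Γ u₀ w p (k+1) x t
          = kerA volume Γ u₀ w x t + nonlin volume Γ w p (picard volume Γ u₀ w p k) x t := rfl
      _ ≤ ENNReal.ofReal Nr + ENNReal.ofReal Nr := add_le_add h1 h2
      _ = ENNReal.ofReal (2*Nr) := by
            rw [← ENNReal.ofReal_add hNr0 hNr0]; ring_nf
  -- the limit of the iterates
  set U : EuclideanSpace ℝ (Fin n) → ℝ → ℝ≥0∞ :=
    fun x t => ⨆ k, picard volume Γ u₀ w p k x t with hUdef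
  have hmono : ∀ x t, Monotone fun k => picard volume Γ u₀ w p k x t :=
    fun x t => monotone_nat_of_le_succ (fun k => picard_mono hp0 k x t)
  have hUb : ∀ x t, 0 < t → t ≤ T → U x t ≤ ENNReal.ofReal (2*Nr) :=
    fun x t ht hT' => iSup_le fun k => hpic k x t ht hT'
  have hpicm : ∀ k, Measurable fun q : EuclideanSpace ℝ (Fin n) × ℝ =>
      picard volume Γ u₀ w p k q.1 q.2 := fun k => measurable_picard hmeas hu₀m hwm hp0 k
  have hUm : Measurable fun q : EuclideanSpace ℝ (Fin n) × ℝ => U q.1 q.2 :=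
    Measurable.iSup fun k => hpicm k
  -- fixed point property
  have hfix : ∀ x t, U x t = kerA volume Γ u₀ w x t + nonlin volume Γ w p U x t := by
    intro x t
    have hrw : ∀ (y : EuclideanSpace ℝ (Fin n)) (s : ℝ),
        U y s ^ p = ⨆ k, picard volume Γ u₀ w p k y s ^ p := by
      intro y s
      exact Monotone.map_iSup_of_continuousAt (f := fun a : ℝ≥0∞ => a ^ p)
        ENNReal.continuous_rpow_const.continuousAt
        (fun a b hab => ENNReal.rpow_le_rpow hab hp0)
        (by simp [ENNReal.zero_rpow_of_pos hppos])
    have hmeasin : ∀ (k : ℕ) (s : ℝ), Measurable fun y =>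
        ENNReal.ofReal (Γ x y (t - s) * w y) * picard volume Γ u₀ w p k y s ^ p := by
      intro k s
      have hg : Measurable fun y => Γ x y (t - s) :=
        hmeas.comp (measurable_const.prodMk (measurable_id.prodMk measurable_const))
      exact (ENNReal.measurable_ofReal.comp (hg.mul hwm)).mul
        (ENNReal.continuous_rpow_const.measurable.comp
          ((hpicm k).comp (measurable_id.prodMk measurable_const)))
    have hinner : ∀ s : ℝ,
        (∫⁻ y, ENNReal.ofReal (Γ x y (t - s) * w y) * U y s ^ p)
          = ⨆ k, ∫⁻ y, ENNReal.ofReal (Γ x y (t - s) * w y) *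
              picard volume Γ u₀ w p k y s ^ p := by
      intro s
      simp only [hrw, ENNReal.mul_iSup]
      rw [lintegral_iSup (fun k => hmeasin k s)]
      intro i j hij y
      exact mul_le_mul_right (ENNReal.rpow_le_rpow (hmono y s hij) hp0) _
    have houter : nonlin volume Γ w p U x t
        = ⨆ k, nonlin volume Γ w p (picard volume Γ u₀ w p k) x t := by
      rw [nonlin]
      have := lintegral_congr (μ := volume.restrict (Ioo (0:ℝ) t)) hinner
      rw [this]
      rw [lintegral_iSup]
      · rfl
      · intro k
        have h1 := measurable_inner_nonlin (μ := (volume : Measure (EuclideanSpace ℝ (Fin n))))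
          (v := fun y s => picard volume Γ u₀ w p k y s ^ p) hmeas hwm
          (ENNReal.continuous_rpow_const.measurable.comp (hpicm k))
        exact h1.comp ((measurable_const.prodMk measurable_const).prodMk measurable_id)
      · intro i j hij s
        apply lintegral_mono
        intro y
        exact mul_le_mul_right (ENNReal.rpow_le_rpow (hmono y s hij) hp0) _
    have hshift : U x t = ⨆ k, picard volume Γ u₀ w p (k+1) x t := by
      apply le_antisymm
      · exact iSup_le fun k => le_trans (picard_mono hp0 k x t)
          (le_iSup (fun j => picard volume Γ u₀ w p (j+1) x t) k)
      · exact iSup_le fun k => le_iSup (fun j => picard volume Γ u₀ w p j x t) (k+1)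
    rw [houter, ENNReal.add_iSup, hshift]
    rfl
  have hueq : ∀ (t : ℝ), 0 < t → t < T → ∀ x,
      ENNReal.ofReal ((U x t).toReal)
        = (∫⁻ y, ENNReal.ofReal (Γ x y t * u₀ y * w y))
          + ∫⁻ s in Ioo (0:ℝ) t, ∫⁻ y,
              ENNReal.ofReal (Γ x y (t - s) * (U y s).toReal ^ p * w y) := by
    intro t ht htT x
    have hne : U x t ≠ ⊤ := ((hUb x t ht htT.le).trans_lt ENNReal.ofReal_lt_top).ne
    rw [ENNReal.ofReal_toReal hne, hfix x t]
    have hnl : nonlin volume Γ w p U x t = ∫⁻ s in Ioo (0:ℝ) t, ∫⁻ y,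
        ENNReal.ofReal (Γ x y (t - s) * (U y s).toReal ^ p * w y) := by
      rw [nonlin]
      apply setLIntegral_congr_fun measurableSet_Ioo
      intro s hs
      apply lintegral_congr
      intro y
      have hsne : U y s ≠ ⊤ :=
        ((hUb y s hs.1 (le_trans hs.2.le htT.le)).trans_lt ENNReal.ofReal_lt_top).ne
      have h1 : Γ x y (t - s) * (U y s).toReal ^ p * w y
          = (Γ x y (t - s) * w y) * (U y s).toReal ^ p := by ring
      rw [h1, ENNReal.ofReal_mul (mul_nonneg (hΓ0 _ _ _) (hw0 y)),
        ← ENNReal.ofReal_rpow_of_nonneg ENNReal.toReal_nonneg hp0,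
        ENNReal.ofReal_toReal hsne]
    rw [hnl, kerA]
  -- the solution
  refine ⟨T, hT0, fun x t => (U x t).toReal, ?_, ?_, ?_⟩
  · refine ⟨?_, ?_, ⟨2*Nr, ?_⟩, ?_⟩
    · exact hUm.ennreal_toReal
    · intro x t; exact ENNReal.toReal_nonneg
    · intro t ht htT
      rw [ENNReal.ofReal_lt_ofReal_iff hT0] at htT
      exact Filter.Eventually.of_forall fun x =>
        ENNReal.toReal_le_of_le_ofReal (by linarith) (hUb x t ht htT.le)
    · intro t ht htT
      rw [ENNReal.ofReal_lt_ofReal_iff hT0] at htT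
      exact Filter.Eventually.of_forall (hueq t ht htT)
  · intro v hv t ht htT
    obtain ⟨hvm, hv0, ⟨M, hvM⟩, hvid⟩ := hv
    set M' := max M (2*Nr) with hM'
    have hM'0 : 0 ≤ M' := le_trans (by linarith) (le_max_right M (2*Nr))
    set L := p * M' ^ (p-1) with hL
    have hL0 : 0 ≤ L := mul_nonneg hp0 (Real.rpow_nonneg hM'0 _)
    have hub : ∀ x (s:ℝ), 0 < s → s ≤ T → (U x s).toReal ≤ M' := fun x s h1 h2 =>
      le_trans (ENNReal.toReal_le_of_le_ofReal (by linarith) (hUb x s h1 h2))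
        (le_max_right _ _)
    have hu0' : ∀ (x : EuclideanSpace ℝ (Fin n)) (s:ℝ), 0 ≤ (U x s).toReal :=
      fun x s => ENNReal.toReal_nonneg
    have hOB : ∀ (s:ℝ), 0 < s → s < T →
        ∀ᵐ y ∂(volume : Measure (EuclideanSpace ℝ (Fin n))), v y s ≤ M' := by
      intro s h1 h2
      filter_upwards [hvM s h1 ((ENNReal.ofReal_lt_ofReal_iff hT0).2 h2)] with y hy
      exact le_trans hy (le_max_left _ _)
    -- the key step estimate
    have hstep : ∀ (k : ℕ) (a b : EuclideanSpace ℝ (Fin n) → ℝ → ℝ),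
        Measurable (Function.uncurry b) →
        (∀ y s, 0 ≤ a y s) → (∀ y s, 0 ≤ b y s) →
        (∀ (s:ℝ), 0 < s → s < T →
          ∀ᵐ y ∂(volume : Measure (EuclideanSpace ℝ (Fin n))), a y s ≤ M') →
        (∀ (s:ℝ), 0 < s → s < T →
          ∀ᵐ y ∂(volume : Measure (EuclideanSpace ℝ (Fin n))), b y s ≤ M') →
        (∀ (s:ℝ), 0 < s → s < T →
          ∀ᵐ y ∂(volume : Measure (EuclideanSpace ℝ (Fin n))),
            |a y s - b y s| ≤ M' * (L*s)^k / k.factorial) →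
        ∀ (τ : ℝ), 0 < τ → τ < T → ∀ x,
        (∫⁻ s in Ioo (0:ℝ) τ, ∫⁻ y, ENNReal.ofReal (Γ x y (τ - s) * a y s ^ p * w y))
          ≤ (∫⁻ s in Ioo (0:ℝ) τ, ∫⁻ y, ENNReal.ofReal (Γ x y (τ - s) * b y s ^ p * w y))
            + ENNReal.ofReal (M' * (L*τ)^(k+1) / (k+1).factorial) := by
      intro k a b hbm ha0 hb0 haM hbM hab τ hτ hτT x
      have houter : ∀ s ∈ Ioo (0:ℝ) τ,
          (∫⁻ y, ENNReal.ofReal (Γ x y (τ - s) * a y s ^ p * w y))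
            ≤ (∫⁻ y, ENNReal.ofReal (Γ x y (τ - s) * b y s ^ p * w y))
              + ENNReal.ofReal (L * (M' * (L*s)^k / k.factorial)) := by
        intro s hs
        have hsT : s < T := lt_trans hs.2 hτT
        have hts : 0 < τ - s := by linarith [hs.2]
        have hgm : Measurable fun y => Γ x y (τ - s) :=
          hmeas.comp (measurable_const.prodMk (measurable_id.prodMk measurable_const))
        have hbmy : Measurable fun y => b y s :=
          hbm.comp (measurable_id.prodMk measurable_const)
        have hbp : Measurable fun y => b y s ^ p := by fun_prop
        have he0 : 0 ≤ L * (M' * (L*s)^k / k.factorial) :=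
          mul_nonneg hL0 (div_nonneg (mul_nonneg hM'0
            (pow_nonneg (mul_nonneg hL0 hs.1.le) k)) (Nat.cast_nonneg _))
        have hintb : Measurable fun y => ENNReal.ofReal (Γ x y (τ - s) * b y s ^ p * w y) :=
          ((hgm.mul hbp).mul hwm).ennreal_ofReal
        calc (∫⁻ y, ENNReal.ofReal (Γ x y (τ - s) * a y s ^ p * w y))
            ≤ ∫⁻ y, (ENNReal.ofReal (Γ x y (τ - s) * b y s ^ p * w y)
                + ENNReal.ofReal (Γ x y (τ - s) * w y)
                  * ENNReal.ofReal (L * (M' * (L*s)^k / k.factorial))) := by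
              apply lintegral_mono_ae
              filter_upwards [haM s hs.1 hsT, hbM s hs.1 hsT, hab s hs.1 hsT] with y h1 h2 h3
              have hlip : |a y s ^ p - b y s ^ p| ≤ L * (M' * (L*s)^k / k.factorial) := by
                calc |a y s ^ p - b y s ^ p| ≤ p * M' ^ (p-1) * |a y s - b y s| :=
                      rpow_lip hp.le (ha0 y s) (hb0 y s) h1 h2
                _ = L * |a y s - b y s| := by rw [hL]
                _ ≤ L * (M' * (L*s)^k / k.factorial) := mul_le_mul_of_nonneg_left h3 hL0
              have hgw : 0 ≤ Γ x y (τ - s) * w y := mul_nonneg (hΓ0 _ _ _) (hw0 y)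
              have h4 : a y s ^ p ≤ b y s ^ p + L * (M' * (L*s)^k / k.factorial) := by
                have := abs_le.1 hlip; linarith [this.2]
              have hreal : Γ x y (τ - s) * a y s ^ p * w y
                  ≤ Γ x y (τ - s) * b y s ^ p * w y
                    + (Γ x y (τ - s) * w y) * (L * (M' * (L*s)^k / k.factorial)) := by
                nlinarith [mul_le_mul_of_nonneg_left h4 hgw]
              calc ENNReal.ofReal (Γ x y (τ - s) * a y s ^ p * w y)
                  ≤ ENNReal.ofReal (Γ x y (τ - s) * b y s ^ p * w y
                      + (Γ x y (τ - s) * w y) * (L * (M' * (L*s)^k / k.factorial))) :=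
                    ENNReal.ofReal_le_ofReal hreal
              _ = _ := by
                    rw [ENNReal.ofReal_add (mul_nonneg (mul_nonneg (hΓ0 _ _ _)
                        (Real.rpow_nonneg (hb0 y s) _)) (hw0 y))
                        (mul_nonneg hgw he0),
                      ENNReal.ofReal_mul hgw]
        _ = (∫⁻ y, ENNReal.ofReal (Γ x y (τ - s) * b y s ^ p * w y))
              + ENNReal.ofReal (L * (M' * (L*s)^k / k.factorial)) := by
            rw [lintegral_add_left hintb,
              lintegral_mul_const' _ _ ENNReal.ofReal_ne_top, hK1' x (τ - s) hts, one_mul]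
      have houter2 :
          (∫⁻ s in Ioo (0:ℝ) τ, ∫⁻ y, ENNReal.ofReal (Γ x y (τ - s) * a y s ^ p * w y))
            ≤ (∫⁻ s in Ioo (0:ℝ) τ, ∫⁻ y, ENNReal.ofReal (Γ x y (τ - s) * b y s ^ p * w y))
              + ∫⁻ s in Ioo (0:ℝ) τ, ENNReal.ofReal (L * (M' * (L*s)^k / k.factorial)) := by
        calc (∫⁻ s in Ioo (0:ℝ) τ, ∫⁻ y, ENNReal.ofReal (Γ x y (τ - s) * a y s ^ p * w y))
            ≤ ∫⁻ s in Ioo (0:ℝ) τ,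
                ((∫⁻ y, ENNReal.ofReal (Γ x y (τ - s) * b y s ^ p * w y))
                  + ENNReal.ofReal (L * (M' * (L*s)^k / k.factorial))) :=
              setLIntegral_mono' measurableSet_Ioo houter
        _ = _ := lintegral_add_right _
              (Measurable.ennreal_ofReal (measurable_const.mul
                ((measurable_const.mul
                  ((measurable_const.mul measurable_id).pow_const k)).div_const _)))
      have hR : (∫⁻ s in Ioo (0:ℝ) τ, ENNReal.ofReal (L * (M' * (L*s)^k / k.factorial)))
          = ENNReal.ofReal (M' * (L*τ)^(k+1) / (k+1).factorial) := by
        have hC : ∀ s : ℝ, L * (M' * (L*s)^k / k.factorial)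
            = (M' * L^(k+1) / k.factorial) * s^k := by
          intro s; rw [mul_pow]; ring
        simp_rw [hC]
        have hcont : Continuous fun s : ℝ => (M' * L^(k+1) / (k.factorial : ℝ)) * s^k :=
          continuous_const.mul (continuous_pow k)
        rw [← ofReal_integral_eq_lintegral_ofReal
            ((hcont.integrableOn_Icc (a := 0) (b := τ)).mono_set Ioo_subset_Icc_self)
            ((ae_restrict_iff' measurableSet_Ioo).2
              (Filter.Eventually.of_forall fun s hs => by
                have hs0 : (0:ℝ) ≤ s := hs.1.le
                positivity))]
        rw [← integral_Ioc_eq_integral_Ioo, ← intervalIntegral.integral_of_le hτ.le,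
          intervalIntegral.integral_const_mul, integral_pow]
        congr 1
        rw [zero_pow (Nat.succ_ne_zero k), mul_pow]
        have h1 : (k.factorial : ℝ) ≠ 0 := Nat.cast_ne_zero.2 k.factorial_ne_zero
        have h2 : ((k+1).factorial : ℝ) = (k+1) * k.factorial := by
          rw [Nat.factorial_succ]; push_cast; ring
        rw [h2]
        field_simp
        ring
      calc (∫⁻ s in Ioo (0:ℝ) τ, ∫⁻ y, ENNReal.ofReal (Γ x y (τ - s) * a y s ^ p * w y))
          ≤ (∫⁻ s in Ioo (0:ℝ) τ, ∫⁻ y, ENNReal.ofReal (Γ x y (τ - s) * b y s ^ p * w y))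
            + ∫⁻ s in Ioo (0:ℝ) τ, ENNReal.ofReal (L * (M' * (L*s)^k / k.factorial)) := houter2
      _ = _ := by rw [hR]
    -- iterative a.e. estimate
    have hclaim : ∀ (k : ℕ) (τ : ℝ), 0 < τ → τ < T →
        ∀ᵐ x ∂(volume : Measure (EuclideanSpace ℝ (Fin n))),
          |v x τ - (U x τ).toReal| ≤ M' * (L*τ)^k / k.factorial := by
      intro k
      induction k with
      | zero =>
        intro τ hτ hτT
        filter_upwards [hOB τ hτ hτT] with x h1
        have h2 := hub x τ hτ hτT.le
        have h3 := hu0' x τ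
        have h4 := hv0 x τ
        simp only [pow_zero, Nat.factorial_zero, Nat.cast_one, mul_one, div_one]
        rw [abs_le]; exact ⟨by linarith, by linarith⟩
      | succ k ih =>
        intro τ hτ hτT
        have hA := hstep k v (fun x s => (U x s).toReal) hUm.ennreal_toReal hv0 hu0' hOB
          (fun s h1 h2 => Filter.Eventually.of_forall fun y => hub y s h1 h2.le)
          (fun s h1 h2 => ih s h1 h2) τ hτ hτT
        have hB := hstep k (fun x s => (U x s).toReal) v hvm hu0' hv0
          (fun s h1 h2 => Filter.Eventually.of_forall fun y => hub y s h1 h2.le) hOB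
          (fun s h1 h2 => (ih s h1 h2).mono fun y hy => by rwa [abs_sub_comm]) τ hτ hτT
        have hux := hueq τ hτ hτT
        filter_upwards [hvid τ hτ ((ENNReal.ofReal_lt_ofReal_iff hT0).2 hτT)] with x hx
        set r := M' * (L*τ)^(k+1) / ((k+1).factorial : ℝ) with hr
        have hr0 : 0 ≤ r := by positivity
        have h1 : v x τ ≤ (U x τ).toReal + r := by
          have hchain : ENNReal.ofReal (v x τ) ≤ ENNReal.ofReal ((U x τ).toReal + r) := by
            calc ENNReal.ofReal (v x τ)
                = (∫⁻ y, ENNReal.ofReal (Γ x y τ * u₀ y * w y))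
                  + ∫⁻ s in Ioo (0:ℝ) τ, ∫⁻ y,
                      ENNReal.ofReal (Γ x y (τ - s) * v y s ^ p * w y) := hx
            _ ≤ (∫⁻ y, ENNReal.ofReal (Γ x y τ * u₀ y * w y))
                  + ((∫⁻ s in Ioo (0:ℝ) τ, ∫⁻ y,
                      ENNReal.ofReal (Γ x y (τ - s) * (U y s).toReal ^ p * w y))
                    + ENNReal.ofReal r) := add_le_add_right (hA x) _
            _ = ENNReal.ofReal ((U x τ).toReal) + ENNReal.ofReal r := by
                  rw [← add_assoc, ← hux x]
            _ = ENNReal.ofReal ((U x τ).toReal + r) :=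
                  (ENNReal.ofReal_add ENNReal.toReal_nonneg hr0).symm
          exact (ENNReal.ofReal_le_ofReal_iff
            (add_nonneg ENNReal.toReal_nonneg hr0)).1 hchain
        have h2 : (U x τ).toReal ≤ v x τ + r := by
          have hchain : ENNReal.ofReal ((U x τ).toReal) ≤ ENNReal.ofReal (v x τ + r) := by
            calc ENNReal.ofReal ((U x τ).toReal)
                = (∫⁻ y, ENNReal.ofReal (Γ x y τ * u₀ y * w y))
                  + ∫⁻ s in Ioo (0:ℝ) τ, ∫⁻ y,
                      ENNReal.ofReal (Γ x y (τ - s) * (U y s).toReal ^ p * w y) := hux x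
            _ ≤ (∫⁻ y, ENNReal.ofReal (Γ x y τ * u₀ y * w y))
                  + ((∫⁻ s in Ioo (0:ℝ) τ, ∫⁻ y,
                      ENNReal.ofReal (Γ x y (τ - s) * v y s ^ p * w y))
                    + ENNReal.ofReal r) := add_le_add_right (hB x) _
            _ = ENNReal.ofReal (v x τ) + ENNReal.ofReal r := by
                  rw [← add_assoc, ← hx]
            _ = ENNReal.ofReal (v x τ + r) :=
                  (ENNReal.ofReal_add (hv0 x τ) hr0).symm
          exact (ENNReal.ofReal_le_ofReal_iff (add_nonneg (hv0 x τ) hr0)).1 hchain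
        rw [abs_le]
        exact ⟨by linarith, by linarith⟩
    -- pass to the limit
    have hae : ∀ᵐ x ∂(volume : Measure (EuclideanSpace ℝ (Fin n))),
        ∀ k : ℕ, |v x t - (U x t).toReal| ≤ M' * (L*t)^k / k.factorial :=
      ae_all_iff.2 fun k => hclaim k t ht htT
    filter_upwards [hae] with x hx
    have hlim : Tendsto (fun k : ℕ => M' * (L*t)^k / (k.factorial : ℝ)) atTop (nhds 0) := by
      have h := (FloorSemiring.tendsto_pow_div_factorial_atTop (K := ℝ) (L*t)).const_mul M'
      rw [mul_zero] at h
      simpa [mul_div_assoc] using h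
    have h0 : |v x t - (U x t).toReal| ≤ 0 := ge_of_tendsto' hlim fun k => hx k
    have h1 : v x t - (U x t).toReal = 0 :=
      abs_eq_zero.1 (le_antisymm h0 (abs_nonneg _))
    exact sub_eq_zero.1 h1
  · intro t ht htT
    calc eLpNorm (fun x => (U x t).toReal) ⊤ volume ≤ ENNReal.ofReal (2*Nr) := by
          rw [eLpNorm_exponent_top]
          apply eLpNormEssSup_le_of_ae_bound
          apply Filter.Eventually.of_forall
          intro x
          rw [Real.norm_eq_abs, abs_of_nonneg ENNReal.toReal_nonneg]
          exact ENNReal.toReal_le_of_le_ofReal (by linarith) (hUb x t ht htT.le)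
    _ ≤ ENNReal.ofReal (2*cσ) * N := by
          rw [← hNofReal, ← ENNReal.ofReal_mul (by positivity)]
          apply ENNReal.ofReal_le_ofReal
          nlinarith
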